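/- Let (T,bag) be a regular rooted tree decomposition of a finite graph G of adhesion at most a. Then Σ_{x ∈ V(T)} |V(bgraph(x))| ≤ (a+2)·|V(G)|, and Σ_{x ∈ V(T)} (|V(bgraph(x))| + |E(bgraph(x))|) ≤ (|V(G)| + |E(G)|) + (a+2)²·|V(G)|. -/

import Mathlib

/-- A finite rooted tree, encoded by its parent function. -/
structure RTree (ι : Type*) where
  root : ι
  parent : ι → ι
  parent_root : parent root = root
  reaches_root : ∀ x : ι, ∃ n : ℕ, parent^[n] x = root

namespace RTree

variable {ι : Type*} (T : RTree ι)

/-- `T.Anc x y` means `x` is an ancestor of `y` (every node is its own ancestor). -/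
def Anc (x y : ι) : Prop := ∃ n : ℕ, T.parent^[n] y = x

/-- `T.IsChild y x` means `y` is a child of `x`. -/
def IsChild (y x : ι) : Prop := y ≠ T.root ∧ T.parent y = x

/-- The underlying undirected graph of the rooted tree. -/
def treeGraph : SimpleGraph ι where
  Adj x y := x ≠ y ∧ (T.IsChild x y ∨ T.IsChild y x)
  symm := ⟨fun x y h => ⟨h.1.symm, h.2.symm⟩⟩
  loopless := ⟨fun x h => h.1 rfl⟩

end RTree

/-- Two vertices are connected by a walk all of whose vertices lie in `U`. -/
def ConnIn {V : Type*} (G : SimpleGraph V) (U : Set V) (a b : V) : Prop :=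
  ∃ p : G.Walk a b, ∀ w ∈ p.support, w ∈ U

theorem ConnIn.symm {V : Type*} {G : SimpleGraph V} {U : Set V} {a b : V}
    (h : ConnIn G U a b) : ConnIn G U b a := by
  obtain ⟨p, hp⟩ := h
  refine ⟨p.reverse, fun w hw => hp w ?_⟩
  rwa [SimpleGraph.Walk.support_reverse, List.mem_reverse] at hw

/-- `X` is `(q,k)`-unbreakable in the induced subgraph `G[U]`: for every separation `(A,B)`
of `G[U]` of order at most `k`, one of the two sides contains at most `q` vertices of `X`. -/
def UnbreakableIn {V : Type*} (G : SimpleGraph V) (U X : Set V) (q k : ℕ) : Prop :=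
  ∀ A B : Set V, A ⊆ U → B ⊆ U → A ∪ B = U →
    (∀ a ∈ A \ B, ∀ b ∈ B \ A, ¬ G.Adj a b) →
    (A ∩ B).ncard ≤ k →
    (A ∩ X).ncard ≤ q ∨ (B ∩ X).ncard ≤ q

/-- A rooted tree decomposition of the graph `G`, with nodes indexed by `ι`. -/
structure TreeDecomp {V : Type*} (G : SimpleGraph V) (ι : Type*) extends RTree ι where
  bag : ι → Set V
  /-- (T1) for every vertex, the set of nodes whose bag contains it
  is a nonempty subtree of the tree. -/
  bag_subtree : ∀ u : V, ((toRTree.treeGraph).induce {x : ι | u ∈ bag x}).Connected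
  /-- (T2) every edge is contained in some bag. -/
  bag_edge : ∀ u v : V, G.Adj u v → ∃ x : ι, u ∈ bag x ∧ v ∈ bag x

namespace TreeDecomp

variable {V ι : Type*} {G : SimpleGraph V} (D : TreeDecomp G ι)

/-- The adhesion of a node: intersection of its bag with the bag of its parent
(empty at the root). -/
def adh (x : ι) : Set V :=
  {v : V | x ≠ D.root ∧ v ∈ D.bag (D.parent x) ∧ v ∈ D.bag x}

/-- The margin of a node. -/
def mrg (x : ι) : Set V := D.bag x \ D.adh x

/-- The cone at a node: union of the bags at all its descendants. -/
def cone (x : ι) : Set V := {v : V | ∃ y : ι, D.toRTree.Anc x y ∧ v ∈ D.bag y}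

/-- The component at a node. -/
def comp (x : ι) : Set V := D.cone x \ D.adh x

/-- A tree decomposition is regular if every non-root node has nonempty margin,
connected component, and every adhesion vertex has a neighbour in the component. -/
def Regular : Prop :=
  ∀ x : ι, x ≠ D.root →
    (D.mrg x).Nonempty ∧
    (G.induce (D.comp x)).Connected ∧
    ∀ u ∈ D.adh x, ∃ w ∈ D.comp x, G.Adj u w

end TreeDecomp

namespace TreeDecomp

variable {V ι : Type*} {G : SimpleGraph V} (D : TreeDecomp G ι)

/-- The bag graph at a node `x`: its vertices are the elements of `bag(x)` together with
the children of `x`; two bag vertices are adjacent iff they are adjacent in `G`, a bag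
vertex is adjacent to a child `y` iff it has a `G`-neighbour in `comp(y)`, and no two
children are adjacent. -/
def bgraph (x : ι) : SimpleGraph (↥(D.bag x) ⊕ {y : ι // D.toRTree.IsChild y x}) where
  Adj a b :=
    match a, b with
    | Sum.inl u, Sum.inl v => G.Adj u v
    | Sum.inl u, Sum.inr y => ∃ w ∈ D.comp y.1, G.Adj (u : V) w
    | Sum.inr y, Sum.inl u => ∃ w ∈ D.comp y.1, G.Adj (u : V) w
    | Sum.inr _, Sum.inr _ => False
  symm := by
    constructor
    rintro (u | y) (v | z) h
    · exact G.adj_symm h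
    · exact h
    · exact h
    · exact h
  loopless := by
    constructor
    rintro (u | y) h
    · exact G.irrefl h
    · exact h

end TreeDecomp

namespace RTree

variable {ι : Type*} (T : RTree ι)

lemma root_iterate (n : ℕ) : T.parent^[n] T.root = T.root := by
  induction n with
  | zero => rfl
  | succ n ih => rw [Function.iterate_succ_apply, T.parent_root, ih]

lemma anc_refl (x : ι) : T.Anc x x := ⟨0, rfl⟩

lemma anc_of_parent {x w z : ι} (h : T.Anc x w) (hz : T.parent z = w) : T.Anc x z := by
  obtain ⟨n, hn⟩ := h
  exact ⟨n + 1, by rw [Function.iterate_succ_apply, hz, hn]⟩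

lemma anc_parent {x y : ι} (h : T.Anc x y) (hne : y ≠ x) : T.Anc x (T.parent y) := by
  obtain ⟨n, hn⟩ := h
  cases n with
  | zero => exact absurd hn hne
  | succ n => exact ⟨n, by rwa [Function.iterate_succ_apply] at hn⟩

lemma eq_root_of_periodic {x : ι} {k : ℕ} (hk : 0 < k) (h : T.parent^[k] x = x) :
    x = T.root := by
  obtain ⟨d, hd⟩ := T.reaches_root x
  have key : ∀ m : ℕ, T.parent^[m * k] x = x := by
    intro m
    induction m with
    | zero => simp
    | succ m ih => rw [Nat.succ_mul, Function.iterate_add_apply, h, ih]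
  have h1 : T.parent^[d * k] x = x := key d
  have h2 : T.parent^[d * k] x = T.root := by
    have hdk : d ≤ d * k := Nat.le_mul_of_pos_right d hk
    rw [← Nat.sub_add_cancel hdk, Function.iterate_add_apply, hd, root_iterate]
  rw [← h1, h2]

lemma anc_antisymm {x y : ι} (h1 : T.Anc x y) (h2 : T.Anc y x) : x = y := by
  obtain ⟨n, hn⟩ := h1
  obtain ⟨m, hm⟩ := h2
  rcases Nat.eq_zero_or_pos (n + m) with h0 | hpos
  · obtain ⟨rfl, rfl⟩ : n = 0 ∧ m = 0 := by omega
    exact hn.symm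
  · have hper : T.parent^[n + m] x = x := by
      rw [Function.iterate_add_apply, hm, hn]
    have hx : x = T.root := T.eq_root_of_periodic hpos hper
    have hy : y = T.root := by rw [← hm, hx, root_iterate]
    rw [hx, hy]

lemma parent_eq_self {x : ι} (h : T.parent x = x) : x = T.root :=
  T.eq_root_of_periodic (k := 1) one_pos h

lemma crossing {S : Set ι} {y : ι} :
    ∀ {z x : ↥S}, ((T.treeGraph).induce S).Walk z x → T.Anc y z.1 → ¬ T.Anc y x.1 →
      y ∈ S ∧ T.parent y ∈ S := by
  intro z x p
  induction p with
  | nil => exact fun h1 h2 => absurd h1 h2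
  | @cons u v w h p ih =>
    intro hu hw
    by_cases hv : T.Anc y v.1
    · exact ih hv hw
    · have hadj : T.treeGraph.Adj u.1 v.1 := h
      obtain ⟨hne, hc | hc⟩ := hadj
      · -- IsChild u v : parent u = v
        rcases eq_or_ne (u : ι) y with heq | hne2
        · exact ⟨heq ▸ u.2, by rw [← heq, hc.2]; exact v.2⟩
        · exact absurd (hc.2 ▸ T.anc_parent hu hne2) hv
      · exact absurd (T.anc_of_parent hu hc.2) hv

lemma anc_walk {S : Set ι} {x : ι} (htop : x = T.root ∨ T.parent x ∉ S) :
    ∀ {w z : ↥S}, ((T.treeGraph).induce S).Walk w z → T.Anc x w.1 → T.Anc x z.1 := by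
  intro w z p
  induction p with
  | nil => exact id
  | @cons u v t h p ih =>
    intro hu
    apply ih
    have hadj : T.treeGraph.Adj u.1 v.1 := h
    obtain ⟨hne, hc | hc⟩ := hadj
    · rcases eq_or_ne (u : ι) x with heq | hne2
      · rcases htop with hroot | hnp
        · have : v.1 = x := by rw [← hc.2, heq, hroot, T.parent_root]
          exact this ▸ T.anc_refl x
        · exact absurd (by rw [← heq, hc.2]; exact v.2) hnp
      · exact hc.2 ▸ T.anc_parent hu hne2
    · exact T.anc_of_parent hu hc.2

lemma top_anc {S : Set ι} (hconn : ((T.treeGraph).induce S).Connected)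
    {x : ι} (hx : x ∈ S) (htop : x = T.root ∨ T.parent x ∉ S) :
    ∀ z ∈ S, T.Anc x z := by
  intro z hz
  obtain ⟨p⟩ := hconn ⟨x, hx⟩ ⟨z, hz⟩
  exact T.anc_walk htop p (T.anc_refl x)

open Classical in
noncomputable def depth (x : ι) : ℕ := Nat.find (T.reaches_root x)

open Classical in
lemma depth_spec (x : ι) : T.parent^[T.depth x] x = T.root := by
  unfold depth; exact Nat.find_spec (T.reaches_root x)

open Classical in
lemma depth_parent_lt {x : ι} (hx : x ≠ T.root) : T.depth (T.parent x) < T.depth x := by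
  have h1 : 1 ≤ T.depth x := by
    rcases Nat.eq_zero_or_pos (T.depth x) with h0 | h
    · exact absurd (by have := T.depth_spec x; rwa [h0] at this) hx
    · exact h
  have hstep : T.parent^[T.depth x - 1] (T.parent x) = T.root := by
    rw [← Function.iterate_succ_apply]
    have : (T.depth x - 1).succ = T.depth x := by omega
    rw [this]
    exact T.depth_spec x
  have hle : T.depth (T.parent x) ≤ T.depth x - 1 := Nat.find_le hstep
  omega

lemma exists_top_aux {S : Set ι} :
    ∀ (n : ℕ) (x0 : ι), T.depth x0 ≤ n → x0 ∈ S →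
      ∃ x ∈ S, x = T.root ∨ T.parent x ∉ S := by
  intro n
  induction n with
  | zero =>
    intro x0 h0 hx0
    refine ⟨x0, hx0, Or.inl ?_⟩
    have := T.depth_spec x0
    rwa [Nat.le_zero.mp h0] at this
  | succ n ih =>
    intro x0 hle hx0
    by_cases hroot : x0 = T.root
    · exact ⟨x0, hx0, Or.inl hroot⟩
    by_cases hp : T.parent x0 ∈ S
    · exact ih (T.parent x0) (by have := T.depth_parent_lt hroot; omega) hp
    · exact ⟨x0, hx0, Or.inr hp⟩

lemma exists_top {S : Set ι} {x0 : ι} (hx0 : x0 ∈ S) :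
    ∃ x ∈ S, x = T.root ∨ T.parent x ∉ S :=
  T.exists_top_aux (T.depth x0) x0 le_rfl hx0

end RTree

namespace TreeDecomp

variable {V ι : Type*} {G : SimpleGraph V} (D : TreeDecomp G ι)

lemma adh_subset_bag (x : ι) : D.adh x ⊆ D.bag x := fun _ h => h.2.2

lemma mem_mrg_iff {u : V} {x : ι} :
    u ∈ D.mrg x ↔ u ∈ D.bag x ∧ (x = D.root ∨ u ∉ D.bag (D.parent x)) := by
  unfold mrg adh
  constructor
  · rintro ⟨hb, hn⟩
    refine ⟨hb, ?_⟩
    by_cases hr : x = D.root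
    · exact Or.inl hr
    · exact Or.inr fun hp => hn ⟨hr, hp, hb⟩
  · rintro ⟨hb, hr | hp⟩
    · exact ⟨hb, fun h => h.1 hr⟩
    · exact ⟨hb, fun h => hp h.2.1⟩

lemma mrg_anc {u : V} {x z : ι} (hu : u ∈ D.mrg x) (hz : u ∈ D.bag z) :
    D.toRTree.Anc x z := by
  obtain ⟨hb, htop⟩ := D.mem_mrg_iff.mp hu
  exact D.toRTree.top_anc (D.bag_subtree u) hb htop z hz

lemma mrg_existsUnique (u : V) : ∃! x : ι, u ∈ D.mrg x := by
  have hconn := D.bag_subtree u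
  obtain ⟨⟨x0, hx0⟩⟩ := hconn.nonempty
  obtain ⟨x, hxS, htop⟩ := D.toRTree.exists_top (S := {x | u ∈ D.bag x}) hx0
  refine ⟨x, D.mem_mrg_iff.mpr ⟨hxS, htop⟩, fun y hy => ?_⟩
  exact D.toRTree.anc_antisymm (D.mrg_anc hy hxS)
    (D.mrg_anc (D.mem_mrg_iff.mpr ⟨hxS, htop⟩) (D.mem_mrg_iff.mp hy).1)

lemma comp_anc {y z : ι} {w : V} (hy : y ≠ D.root) (hw : w ∈ D.comp y)
    (hz : w ∈ D.bag z) : D.toRTree.Anc y z := by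
  obtain ⟨⟨y', hy', hwy'⟩, hwadh⟩ := hw
  by_contra hnz
  obtain ⟨p⟩ := (D.bag_subtree w) ⟨y', hwy'⟩ ⟨z, hz⟩
  have := D.toRTree.crossing p hy' hnz
  exact hwadh ⟨hy, this.2, this.1⟩

lemma cross_mem_adh {x y : ι} {u w : V} (hchild : D.toRTree.IsChild y x)
    (hu : u ∈ D.bag x) (hw : w ∈ D.comp y) (hadj : G.Adj u w) : u ∈ D.adh y := by
  obtain ⟨z, hz1, hz2⟩ := D.bag_edge u w hadj
  have hyz : D.toRTree.Anc y z := D.comp_anc hchild.1 hw hz2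
  have hxny : ¬ D.toRTree.Anc y x := by
    intro h
    have hxy : y = x := D.toRTree.anc_antisymm h
      (D.toRTree.anc_of_parent (D.toRTree.anc_refl x) hchild.2)
    have : y = D.root := D.toRTree.parent_eq_self (by rw [hchild.2, hxy])
    exact hchild.1 this
  obtain ⟨p⟩ := (D.bag_subtree u) ⟨z, hz1⟩ ⟨x, hu⟩
  have hcr := D.toRTree.crossing p hyz hxny
  exact ⟨hchild.1, hcr.2, hcr.1⟩

end TreeDecomp

lemma ncard_filter_eq {α : Type*} [Fintype α] (s : Set α) [DecidablePred (· ∈ s)] :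
    s.ncard = (Finset.univ.filter (· ∈ s)).card := by
  classical
  rw [Set.ncard_eq_toFinset_card']
  rw [Set.filter_mem_univ_eq_toFinset]

namespace TreeDecomp

open Finset

section Counting

variable {V ι : Type*} [Fintype V] [Fintype ι] {G : SimpleGraph V} (D : TreeDecomp G ι)

/-- the nonroot nodes -/
noncomputable def nonroot : Finset ι := by
  classical exact univ.filter (· ≠ D.root)

lemma mem_nonroot {x : ι} : x ∈ D.nonroot ↔ x ≠ D.root := by
  unfold nonroot
  simp

/-- the children of `x` as a finset -/
noncomputable def childF (x : ι) : Finset ι := by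
  classical exact univ.filter (fun y => D.toRTree.IsChild y x)

lemma mem_childF {x y : ι} : y ∈ D.childF x ↔ D.toRTree.IsChild y x := by
  unfold childF
  simp

lemma card_children (x : ι) :
    Nat.card {y : ι // D.toRTree.IsChild y x} = (D.childF x).card := by
  classical
  rw [Nat.card_eq_fintype_card, Fintype.card_subtype]
  apply Finset.card_bij (fun y _ => y) <;> simp [mem_childF]

lemma sum_card_children : ∑ x : ι, (D.childF x).card = D.nonroot.card := by
  classical
  rw [Finset.card_eq_sum_card_fiberwise (f := D.parent) (t := univ)
    (fun x _ => mem_univ _)]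
  apply Finset.sum_congr rfl
  intro x _
  congr 1
  ext y
  simp only [mem_childF, mem_filter, mem_nonroot, RTree.IsChild]

lemma sum_ncard_mrg : ∑ x : ι, (D.mrg x).ncard = Fintype.card V := by
  classical
  have h1 : ∀ x : ι, (D.mrg x).ncard = ∑ u : V, if u ∈ D.mrg x then 1 else 0 := by
    intro x
    rw [ncard_filter_eq, Finset.card_filter]
  simp_rw [h1]
  rw [Finset.sum_comm]
  have h2 : ∀ u : V, (∑ x : ι, if u ∈ D.mrg x then 1 else 0) = 1 := by
    intro u
    obtain ⟨x0, hx0, huniq⟩ := D.mrg_existsUnique u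
    rw [← Finset.card_filter, Finset.card_eq_one]
    refine ⟨x0, ?_⟩
    ext y
    simp only [mem_filter, mem_univ, true_and, mem_singleton]
    exact ⟨fun h => huniq y h, fun h => h ▸ hx0⟩
  simp_rw [h2]
  simp

lemma nonroot_card_le (hreg : D.Regular) : D.nonroot.card ≤ Fintype.card V := by
  classical
  calc D.nonroot.card = ∑ _x ∈ D.nonroot, 1 := by simp
    _ ≤ ∑ x ∈ D.nonroot, (D.mrg x).ncard := by
        apply Finset.sum_le_sum
        intro x hx
        have hne : (D.mrg x).Nonempty := (hreg x (D.mem_nonroot.mp hx)).1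
        have := (Set.ncard_pos (s := D.mrg x) (Set.toFinite _)).mpr hne
        omega
    _ ≤ ∑ x : ι, (D.mrg x).ncard := by
        refine Finset.sum_le_sum_of_subset ?_
        unfold nonroot
        exact Finset.filter_subset _ _
    _ = Fintype.card V := D.sum_ncard_mrg

lemma sum_ncard_adh (a : ℕ) (hadh : ∀ x : ι, (D.adh x).ncard ≤ a) :
    ∑ x : ι, (D.adh x).ncard ≤ a * D.nonroot.card := by
  classical
  have hroot : ∀ x : ι, x ∉ D.nonroot → (D.adh x).ncard = 0 := by
    intro x hx
    have hx' : x = D.root := by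
      by_contra h
      exact hx (D.mem_nonroot.mpr h)
    have : D.adh x = ∅ := by
      ext u
      simp only [adh, Set.mem_setOf_eq, Set.mem_empty_iff_false, iff_false]
      rintro ⟨h1, -⟩
      exact h1 hx'
    simp [this]
  calc ∑ x : ι, (D.adh x).ncard = ∑ x ∈ D.nonroot, (D.adh x).ncard := by
        refine (Finset.sum_subset ?_ ?_).symm
        · unfold nonroot; exact Finset.filter_subset _ _
        · exact fun x _ hx => hroot x hx
    _ ≤ ∑ _x ∈ D.nonroot, a := Finset.sum_le_sum (fun x _ => hadh x)
    _ = a * D.nonroot.card := by rw [Finset.sum_const, smul_eq_mul, mul_comm]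

lemma ncard_bag (x : ι) : (D.bag x).ncard = (D.mrg x).ncard + (D.adh x).ncard := by
  rw [← Set.ncard_diff_add_ncard_of_subset (D.adh_subset_bag x) (Set.toFinite _)]
  rfl

end Counting
end TreeDecomp

namespace TreeDecomp

open Finset

section Edges

variable {V ι : Type*} [Fintype V] [Fintype ι] {G : SimpleGraph V} (D : TreeDecomp G ι)

/-- edges of `G` inside the bag of `x` -/
def bagE (x : ι) : Set (Sym2 V) := {e | e ∈ G.edgeSet ∧ ∀ v ∈ e, v ∈ D.bag x}

/-- edges of `G` inside the adhesion of `x` -/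
def adhE (x : ι) : Set (Sym2 V) := {e | e ∈ G.edgeSet ∧ ∀ v ∈ e, v ∈ D.adh x}

/-- pairs recording cross edges at `x` -/
def crossP (x : ι) : Set (V × ι) := {p | D.toRTree.IsChild p.2 x ∧ p.1 ∈ D.adh p.2}

/-- encoding of the edges of the bag graph at `x` -/
def emap (x : ι) :
    Sym2 (↥(D.bag x) ⊕ {y : ι // D.toRTree.IsChild y x}) → Option (Sym2 V ⊕ V × ι) :=
  Sym2.lift ⟨fun a b =>
    match a, b with
    | Sum.inl u, Sum.inl v => some (Sum.inl s(u.1, v.1))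
    | Sum.inl u, Sum.inr y => some (Sum.inr (u.1, y.1))
    | Sum.inr y, Sum.inl u => some (Sum.inr (u.1, y.1))
    | Sum.inr _, Sum.inr _ => none,
   by rintro (u | y) (v | z) <;> simp [Sym2.eq_swap]⟩

lemma edge_bound (x : ι) :
    (D.bgraph x).edgeSet.ncard ≤ (D.bagE x).ncard + (D.crossP x).ncard := by
  classical
  set T : Set (Option (Sym2 V ⊕ V × ι)) :=
    some '' (Sum.inl '' D.bagE x ∪ Sum.inr '' D.crossP x) with hT
  have hTfin : T.Finite := ((((D.bagE x).toFinite.image _).union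
    (((D.crossP x).toFinite).image _)).image _)
  have hmaps : ∀ e ∈ (D.bgraph x).edgeSet, D.emap x e ∈ T := by
    intro e
    induction e with
    | _ a b =>
      intro he
      rw [SimpleGraph.mem_edgeSet] at he
      match a, b, he with
      | Sum.inl u, Sum.inl v, he =>
        have hadj : G.Adj u.1 v.1 := he
        refine Set.mem_image_of_mem _ (Set.mem_union_left _ (Set.mem_image_of_mem _ ?_))
        refine ⟨G.mem_edgeSet.mpr hadj, fun w hw => ?_⟩
        rcases Sym2.mem_iff.mp hw with rfl | rfl
        exacts [u.2, v.2]
      | Sum.inl u, Sum.inr y, he =>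
        obtain ⟨w, hw, hadj⟩ := (he : ∃ w ∈ D.comp y.1, G.Adj u.1 w)
        exact Set.mem_image_of_mem _ (Set.mem_union_right _ (Set.mem_image_of_mem _
          ⟨y.2, D.cross_mem_adh y.2 u.2 hw hadj⟩))
      | Sum.inr y, Sum.inl u, he =>
        obtain ⟨w, hw, hadj⟩ := (he : ∃ w ∈ D.comp y.1, G.Adj u.1 w)
        exact Set.mem_image_of_mem _ (Set.mem_union_right _ (Set.mem_image_of_mem _
          ⟨y.2, D.cross_mem_adh y.2 u.2 hw hadj⟩))
      | Sum.inr y, Sum.inr z, he => exact he.elim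
  have hinj : Set.InjOn (D.emap x) (D.bgraph x).edgeSet := by
    intro e he e' he'
    revert he he'
    induction e with
    | _ a b =>
      induction e' with
      | _ a' b' =>
        intro he he' heq
        rw [SimpleGraph.mem_edgeSet] at he he'
        simp only [emap, Sym2.lift_mk] at heq
        match a, b, a', b', he, he', heq with
        | Sum.inl u, Sum.inl v, Sum.inl u', Sum.inl v', he, he', heq =>
          simp only [Option.some.injEq, Sum.inl.injEq, Sym2.eq_iff] at heq
          rcases heq with ⟨h1, h2⟩ | ⟨h1, h2⟩
          · rw [Subtype.ext h1, Subtype.ext h2]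
          · rw [Subtype.ext h1, Subtype.ext h2, Sym2.eq_swap]
        | Sum.inl u, Sum.inl v, Sum.inl u', Sum.inr y', he, he', heq => simp at heq
        | Sum.inl u, Sum.inl v, Sum.inr y', Sum.inl u', he, he', heq => simp at heq
        | Sum.inl u, Sum.inr y, Sum.inl u', Sum.inl v', he, he', heq => simp at heq
        | Sum.inr y, Sum.inl u, Sum.inl u', Sum.inl v', he, he', heq => simp at heq
        | Sum.inl u, Sum.inr y, Sum.inl u', Sum.inr y', he, he', heq =>
          simp only [Option.some.injEq, Sum.inr.injEq, Prod.mk.injEq] at heq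
          rw [Subtype.ext heq.1, Subtype.ext heq.2]
        | Sum.inl u, Sum.inr y, Sum.inr y', Sum.inl u', he, he', heq =>
          simp only [Option.some.injEq, Sum.inr.injEq, Prod.mk.injEq] at heq
          rw [Subtype.ext heq.1, Subtype.ext heq.2, Sym2.eq_swap]
        | Sum.inr y, Sum.inl u, Sum.inl u', Sum.inr y', he, he', heq =>
          simp only [Option.some.injEq, Sum.inr.injEq, Prod.mk.injEq] at heq
          rw [Subtype.ext heq.1, Subtype.ext heq.2, Sym2.eq_swap]
        | Sum.inr y, Sum.inl u, Sum.inr y', Sum.inl u', he, he', heq =>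
          simp only [Option.some.injEq, Sum.inr.injEq, Prod.mk.injEq] at heq
          rw [Subtype.ext heq.1, Subtype.ext heq.2]
        | Sum.inr y, Sum.inr z, _, _, he, he', heq => exact he.elim
        | Sum.inl u, Sum.inr y, Sum.inr y', Sum.inr z', he, he', heq => exact he'.elim
        | Sum.inr y, Sum.inl u, Sum.inr y', Sum.inr z', he, he', heq => exact he'.elim
        | Sum.inl u, Sum.inl v, Sum.inr y', Sum.inr z', he, he', heq => exact he'.elim
  calc (D.bgraph x).edgeSet.ncard ≤ T.ncard :=
        Set.ncard_le_ncard_of_injOn _ hmaps hinj hTfin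
    _ = (Sum.inl '' D.bagE x ∪ Sum.inr '' D.crossP x).ncard := by
        rw [hT, Set.ncard_image_of_injective _ (Option.some_injective _)]
    _ ≤ (Sum.inl '' D.bagE x).ncard + (Sum.inr '' D.crossP x).ncard :=
        Set.ncard_union_le _ _
    _ = (D.bagE x).ncard + (D.crossP x).ncard := by
        rw [Set.ncard_image_of_injective _ Sum.inl_injective,
          Set.ncard_image_of_injective _ Sum.inr_injective]

end Edges
end TreeDecomp

namespace TreeDecomp

open Finset

section EdgeSums

variable {V ι : Type*} [Fintype V] [Fintype ι] {G : SimpleGraph V} (D : TreeDecomp G ι)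

lemma adhE_subset_bagE (x : ι) : D.adhE x ⊆ D.bagE x :=
  fun e he => ⟨he.1, fun v hv => (he.2 v hv).2.2⟩

lemma ncard_bagE (x : ι) :
    (D.bagE x).ncard = (D.bagE x \ D.adhE x).ncard + (D.adhE x).ncard :=
  (Set.ncard_diff_add_ncard_of_subset (D.adhE_subset_bagE x) (Set.toFinite _)).symm

lemma newE_unique {e : Sym2 V} {x x' : ι}
    (h1 : e ∈ D.bagE x \ D.adhE x) (h2 : e ∈ D.bagE x' \ D.adhE x') : x = x' := by
  obtain ⟨⟨hE, hbag⟩, hnadh⟩ := h1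
  obtain ⟨⟨_, hbag'⟩, hnadh'⟩ := h2
  have hex : ∃ w ∈ e, w ∉ D.adh x := by
    by_contra h
    push_neg at h
    exact hnadh ⟨hE, h⟩
  have hex' : ∃ w ∈ e, w ∉ D.adh x' := by
    by_contra h
    push_neg at h
    exact hnadh' ⟨hE, h⟩
  obtain ⟨w, hwe, hw⟩ := hex
  obtain ⟨w', hwe', hw'⟩ := hex'
  have hwm : w ∈ D.mrg x := ⟨hbag w hwe, hw⟩
  have hwm' : w' ∈ D.mrg x' := ⟨hbag' w' hwe', hw'⟩
  exact D.toRTree.anc_antisymm (D.mrg_anc hwm (hbag' w hwe))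
    (D.mrg_anc hwm' (hbag w' hwe'))

lemma sum_ncard_newE : ∑ x : ι, (D.bagE x \ D.adhE x).ncard ≤ G.edgeSet.ncard := by
  classical
  have h1 : ∀ x : ι, (D.bagE x \ D.adhE x).ncard =
      ∑ e : Sym2 V, if e ∈ D.bagE x \ D.adhE x then 1 else 0 := by
    intro x
    rw [ncard_filter_eq, Finset.card_filter]
  simp_rw [h1]
  rw [Finset.sum_comm]
  have h2 : ∀ e : Sym2 V,
      (∑ x : ι, if e ∈ D.bagE x \ D.adhE x then 1 else 0) ≤ if e ∈ G.edgeSet then 1 else 0 := by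
    intro e
    rw [← Finset.card_filter]
    by_cases hE : e ∈ G.edgeSet
    · simp only [hE, if_true]
      apply Finset.card_le_one.mpr
      intro x hx x' hx'
      simp only [mem_filter, mem_univ, true_and] at hx hx'
      exact D.newE_unique hx hx'
    · simp only [hE, if_false, Nat.le_zero, Finset.card_eq_zero,
        Finset.filter_eq_empty_iff]
      intro x _
      rw [Set.mem_diff]
      rintro ⟨⟨h, -⟩, -⟩
      exact hE h
  calc ∑ e : Sym2 V, ∑ x : ι, (if e ∈ D.bagE x \ D.adhE x then 1 else 0)
      ≤ ∑ e : Sym2 V, if e ∈ G.edgeSet then 1 else 0 := Finset.sum_le_sum (fun e _ => h2 e)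
    _ = G.edgeSet.ncard := by rw [← Finset.card_filter, ← ncard_filter_eq]

lemma ncard_prod_le {α β : Type*} [Fintype α] [Fintype β] (s : Set α) (t : Set β) :
    (s ×ˢ t).ncard = s.ncard * t.ncard := by
  classical
  rw [Set.ncard_eq_toFinset_card', Set.ncard_eq_toFinset_card', Set.ncard_eq_toFinset_card',
    Set.toFinset_prod, Finset.card_product]

lemma ncard_adhE_le (a : ℕ) (hadh : ∀ x : ι, (D.adh x).ncard ≤ a) (x : ι) :
    (D.adhE x).ncard ≤ a * a := by
  classical
  have h1 : (D.adhE x).ncard ≤ (D.adh x ×ˢ D.adh x).ncard := by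
    apply Set.ncard_le_ncard_of_injOn (fun e => e.out)
    · intro e he
      exact ⟨he.2 _ (Sym2.out_fst_mem e), he.2 _ (Sym2.out_snd_mem e)⟩
    · intro e _ e' _ h
      have h2 := congrArg (Quot.mk (Sym2.Rel V)) h
      rwa [e.out_eq, e'.out_eq] at h2
  rw [ncard_prod_le] at h1
  exact h1.trans (Nat.mul_le_mul (hadh x) (hadh x))

lemma adhE_root : D.adhE D.root = ∅ := by
  ext e
  simp only [adhE, Set.mem_setOf_eq, Set.mem_empty_iff_false, iff_false, not_and]
  intro _
  intro h
  exact (h _ (Sym2.out_fst_mem e)).1 rfl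

lemma sum_ncard_adhE (a : ℕ) (hadh : ∀ x : ι, (D.adh x).ncard ≤ a) :
    ∑ x : ι, (D.adhE x).ncard ≤ a * a * D.nonroot.card := by
  classical
  calc ∑ x : ι, (D.adhE x).ncard = ∑ x ∈ D.nonroot, (D.adhE x).ncard := by
        refine (Finset.sum_subset ?_ ?_).symm
        · unfold nonroot; exact Finset.filter_subset _ _
        · intro x _ hx
          have : x = D.root := by
            by_contra h
            exact hx (D.mem_nonroot.mpr h)
          rw [this, D.adhE_root]
          simp
    _ ≤ ∑ _x ∈ D.nonroot, a * a := Finset.sum_le_sum (fun x _ => D.ncard_adhE_le a hadh x)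
    _ = a * a * D.nonroot.card := by rw [Finset.sum_const, smul_eq_mul, mul_comm]

lemma ncard_crossP_le (a : ℕ) (hadh : ∀ x : ι, (D.adh x).ncard ≤ a) (x : ι) :
    (D.crossP x).ncard ≤ a * (D.childF x).card := by
  classical
  rw [ncard_filter_eq]
  rw [Finset.card_eq_sum_card_fiberwise (f := Prod.snd) (t := D.childF x)
    (by intro p hp; simp only [mem_coe, mem_filter] at hp; exact D.mem_childF.mpr hp.2.1)]
  calc ∑ y ∈ D.childF x, ((univ.filter (· ∈ D.crossP x)).filter (fun p => p.2 = y)).card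
      ≤ ∑ _y ∈ D.childF x, a := by
        apply Finset.sum_le_sum
        intro y _
        have hinj : ((univ.filter (· ∈ D.crossP x)).filter (fun p => p.2 = y)).card ≤
            (D.adh y).toFinset.card := by
          apply Finset.card_le_card_of_injOn (fun p => p.1)
          · intro p hp
            simp only [mem_coe, mem_filter, mem_univ, true_and] at hp
            rw [mem_coe, Set.mem_toFinset]
            have := hp.1.2
            rwa [hp.2] at this
          · intro p hp q hq h
            simp only [coe_filter, Set.mem_setOf_eq] at hp hq
            exact Prod.ext h (hp.2.trans hq.2.symm)
        rw [← Set.ncard_eq_toFinset_card'] at hinj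
        exact hinj.trans (hadh y)
    _ = a * (D.childF x).card := by rw [Finset.sum_const, smul_eq_mul, mul_comm]

lemma sum_ncard_crossP (a : ℕ) (hadh : ∀ x : ι, (D.adh x).ncard ≤ a) :
    ∑ x : ι, (D.crossP x).ncard ≤ a * D.nonroot.card := by
  calc ∑ x : ι, (D.crossP x).ncard ≤ ∑ x : ι, a * (D.childF x).card :=
        Finset.sum_le_sum (fun x _ => D.ncard_crossP_le a hadh x)
    _ = a * ∑ x : ι, (D.childF x).card := by rw [Finset.mul_sum]
    _ = a * D.nonroot.card := by rw [D.sum_card_children]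

end EdgeSums
end TreeDecomp

/-- For a regular rooted tree decomposition of adhesion at most `a`,
the total number of vertices of all bag graphs is at most `(a+2)·|V(G)|`, and the total
size (vertices plus edges) of all bag graphs is at most `(|V(G)|+|E(G)|) + (a+2)²·|V(G)|`. -/
theorem stmt3 {V ι : Type*} [Fintype V] [Fintype ι] {G : SimpleGraph V}
    (D : TreeDecomp G ι) (hreg : D.Regular)
    (a : ℕ) (hadh : ∀ x : ι, (D.adh x).ncard ≤ a) :
    (∑ x : ι, Nat.card (↥(D.bag x) ⊕ {y : ι // D.toRTree.IsChild y x}))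
        ≤ (a + 2) * Nat.card V ∧
    (∑ x : ι, (Nat.card (↥(D.bag x) ⊕ {y : ι // D.toRTree.IsChild y x})
          + (D.bgraph x).edgeSet.ncard))
        ≤ (Nat.card V + G.edgeSet.ncard) + (a + 2) ^ 2 * Nat.card V := by
  classical
  have hN : D.nonroot.card ≤ Fintype.card V := D.nonroot_card_le hreg
  have hSA : ∑ x : ι, (D.adh x).ncard ≤ a * D.nonroot.card := D.sum_ncard_adh a hadh
  have hbagsum : ∑ x : ι, (D.bag x).ncard
      = Fintype.card V + ∑ x : ι, (D.adh x).ncard := by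
    calc ∑ x : ι, (D.bag x).ncard
        = ∑ x : ι, ((D.mrg x).ncard + (D.adh x).ncard) :=
          Finset.sum_congr rfl (fun x _ => D.ncard_bag x)
      _ = (∑ x : ι, (D.mrg x).ncard) + ∑ x : ι, (D.adh x).ncard := Finset.sum_add_distrib
      _ = _ := by rw [D.sum_ncard_mrg]
  have hvert : ∑ x : ι, Nat.card (↥(D.bag x) ⊕ {y : ι // D.toRTree.IsChild y x})
      = (Fintype.card V + ∑ x : ι, (D.adh x).ncard) + D.nonroot.card := by
    calc ∑ x : ι, Nat.card (↥(D.bag x) ⊕ {y : ι // D.toRTree.IsChild y x})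
        = ∑ x : ι, ((D.bag x).ncard + (D.childF x).card) := by
          refine Finset.sum_congr rfl (fun x _ => ?_)
          rw [Nat.card_sum, Nat.card_coe_set_eq, D.card_children]
      _ = (∑ x : ι, (D.bag x).ncard) + ∑ x : ι, (D.childF x).card := Finset.sum_add_distrib
      _ = _ := by rw [hbagsum, D.sum_card_children]
  have hV : Nat.card V = Fintype.card V := Nat.card_eq_fintype_card
  constructor
  · rw [hvert, hV]
    nlinarith
  · have hedges : ∑ x : ι, (D.bgraph x).edgeSet.ncard ≤
        (G.edgeSet.ncard + a * a * D.nonroot.card) + a * D.nonroot.card := by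
      calc ∑ x : ι, (D.bgraph x).edgeSet.ncard
          ≤ ∑ x : ι, ((D.bagE x).ncard + (D.crossP x).ncard) :=
            Finset.sum_le_sum (fun x _ => D.edge_bound x)
        _ = (∑ x : ι, (D.bagE x).ncard) + ∑ x : ι, (D.crossP x).ncard :=
            Finset.sum_add_distrib
        _ = ((∑ x : ι, (D.bagE x \ D.adhE x).ncard) + ∑ x : ι, (D.adhE x).ncard)
              + ∑ x : ι, (D.crossP x).ncard := by
            have : (∑ x : ι, (D.bagE x).ncard)
                = (∑ x : ι, (D.bagE x \ D.adhE x).ncard) + ∑ x : ι, (D.adhE x).ncard := by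
              rw [← Finset.sum_add_distrib]
              exact Finset.sum_congr rfl (fun x _ => D.ncard_bagE x)
            rw [this]
        _ ≤ (G.edgeSet.ncard + a * a * D.nonroot.card) + a * D.nonroot.card :=
            add_le_add (add_le_add D.sum_ncard_newE (D.sum_ncard_adhE a hadh))
              (D.sum_ncard_crossP a hadh)
    rw [Finset.sum_add_distrib, hvert, hV]
    have hsq : (a + 2) ^ 2 = a * a + 4 * a + 4 := by ring
    nlinarith
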